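/- arXiv:2003.10072 — 3 statements merged into one kernel-verified Lean document; each statement's English description precedes it below -/
import Mathlib

section
/- Let V, U, R, S be polynomials over F_q with gcd(V,U) = 1 and gcd(R,S) = 1, such that the rational functions V/U and R/S both induce permutations π and σ of the projective line P¹(F_q) (with q+1 elements), and V·S − U·R is not a constant polynomial. If deg V + deg S ≤ d and deg U + deg R ≤ d, then the Hamming distance between π and σ is at least q − d, where the Hamming distance is the number of points x ∈ P¹(F_q) with π(x) ≠ σ(x). -/
open Polynomial

open scoped Classical in
/-- Evaluation of the rational function `V/U` on the projective line
`P¹(F_q) = F_q ∪ {∞}`, modeled as `Option F` with `none = ∞`. -/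
noncomputable def prfEval {F : Type*} [Field F] (V U : F[X]) : Option F → Option F
  | some a => if U.eval a = 0 then none else some (V.eval a / U.eval a)
  | none =>
    if U.natDegree < V.natDegree then none
    else if V.natDegree < U.natDegree then some 0
    else some (V.leadingCoeff / U.leadingCoeff)

theorem stmt_1 {F : Type*} [Field F] [Fintype F]
    (V U R S : F[X]) (d : ℕ)
    (hVU : IsCoprime V U) (hRS : IsCoprime R S)
    (hW : Function.Bijective (prfEval V U))
    (hY : Function.Bijective (prfEval R S))
    (hnc : ∀ c : F, V * S - U * R ≠ C c)
    (h1 : V.natDegree + S.natDegree ≤ d)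
    (h2 : U.natDegree + R.natDegree ≤ d) :
    Fintype.card F - d ≤ Set.ncard {x : Option F | prfEval V U x ≠ prfEval R S x} := by
  classical
  set W : F[X] := V * S - U * R with hWdef
  have hW0 : W ≠ 0 := by simpa using hnc 0
  have hWd : W.natDegree ≤ d := by
    refine le_trans (natDegree_sub_le _ _) (max_le ?_ ?_)
    · exact le_trans (natDegree_mul_le) h1
    · exact le_trans (natDegree_mul_le) h2
  set A : Finset F := Finset.univ.filter
    (fun a => prfEval V U (some a) = prfEval R S (some a)) with hA
  have hroot : ∀ a ∈ A, W.eval a = 0 := by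
    intro a ha
    have heq : prfEval V U (some a) = prfEval R S (some a) := by
      simpa [hA] using ha
    by_cases hU : U.eval a = 0
    · have h1' : prfEval R S (some a) = none := by
        rw [← heq]; simp [prfEval, hU]
      have hS : S.eval a = 0 := by
        by_contra hS; simp [prfEval, hS] at h1'
      simp [hWdef, hU, hS]
    · have hS : S.eval a ≠ 0 := by
        intro hS
        have : prfEval V U (some a) = none := by rw [heq]; simp [prfEval, hS]
        simp [prfEval, hU] at this
      have hq : V.eval a / U.eval a = R.eval a / S.eval a := by
        have := heq
        simp [prfEval, hU, hS] at this
        exact this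
      field_simp at hq
      simp only [hWdef, eval_sub, eval_mul]
      linear_combination hq
  have hAcard : A.card ≤ d := by
    have hsub : A ⊆ W.roots.toFinset := by
      intro a ha
      simp only [Multiset.mem_toFinset, mem_roots hW0]
      exact hroot a ha
    calc A.card ≤ W.roots.toFinset.card := Finset.card_le_card hsub
      _ ≤ Multiset.card W.roots := W.roots.toFinset_card_le
      _ ≤ W.natDegree := W.card_roots'
      _ ≤ d := hWd
  set B : Finset F := Aᶜ with hB
  have hBcard : Fintype.card F - d ≤ B.card := by
    rw [hB, Finset.card_compl]
    exact Nat.sub_le_sub_left hAcard _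
  have hsub : ((B.image some : Finset (Option F)) : Set (Option F)) ⊆
      {x : Option F | prfEval V U x ≠ prfEval R S x} := by
    intro x hx
    simp only [Finset.coe_image, Set.mem_image, Finset.mem_coe] at hx
    obtain ⟨a, ha, rfl⟩ := hx
    have : a ∉ A := by simpa [hB] using ha
    simpa [hA] using this
  have hle := Set.ncard_le_ncard hsub (Set.toFinite _)
  rw [Set.ncard_coe_finset, Finset.card_image_of_injective _ (Option.some_injective F)] at hle
  exact le_trans hBcard hle
end

section
/- Let F_{2^m} with m > 2, let i > 1, and let d be an even integer with 2^i ≤ d ≤ 2^{i+1} − 3. For any polynomial P(x) of degree d over F_{2^m}, there exists b ∈ F_{2^m} such that in P(x+b), the coefficient of x^{2^i−1} or the coefficient of x^{2^i−2} is zero. -/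
open Polynomial

lemma lemA_aux : ∀ i : ℕ, 1 ≤ i → ∀ j : ℕ, 2 ^ i ≤ j → j ≤ 2 ^ (i + 1) - 2 →
    2 ∣ Nat.choose j (2 ^ i - 1) := by
  haveI : Fact (Nat.Prime 2) := ⟨Nat.prime_two⟩
  intro i
  induction i with
  | zero => omega
  | succ i ih =>
    intro _ j hj1 hj2
    rcases Nat.eq_zero_or_pos i with rfl | hi
    · have hj : j = 2 := by norm_num at hj1 hj2; omega
      subst hj; decide
    · have e1 : 2 ^ (i + 1) = 2 * 2 ^ i := by ring
      have e2 : 2 ^ (i + 1 + 1) = 4 * 2 ^ i := by ring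
      have h2 : 2 ≤ 2 ^ i := by
        calc 2 = 2 ^ 1 := rfl
        _ ≤ 2 ^ i := Nat.pow_le_pow_right (by norm_num) hi
      have key := Choose.choose_modEq_choose_mod_mul_choose_div_nat
        (p := 2) (n := j) (k := 2 ^ (i + 1) - 1)
      unfold Nat.ModEq at key
      have hk1 : (2 ^ (i + 1) - 1) % 2 = 1 := by omega
      have hk2 : (2 ^ (i + 1) - 1) / 2 = 2 ^ i - 1 := by omega
      rw [hk1, hk2] at key
      rcases Nat.even_or_odd j with he | ho
      · have hj0 : j % 2 = 0 := by rcases he with ⟨q, hq⟩; omega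
        rw [hj0] at key
        simp at key
        omega
      · have hj0 : j % 2 = 1 := by rcases ho with ⟨q, hq⟩; omega
        rw [hj0] at key
        have hbound1 : 2 ^ i ≤ j / 2 := by omega
        have hbound2 : j / 2 ≤ 2 ^ (i + 1) - 2 := by omega
        have hd := ih hi (j / 2) hbound1 hbound2
        simp at key
        omega

lemma lemB_aux (i : ℕ) (hi : 2 ≤ i) (j : ℕ) (hj1 : 2 ^ i ≤ j) (hj2 : j ≤ 2 ^ (i + 1) - 3) :
    2 ∣ Nat.choose j (2 ^ i - 2) := by
  haveI : Fact (Nat.Prime 2) := ⟨Nat.prime_two⟩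
  obtain ⟨i, rfl⟩ : ∃ k, i = k + 1 := ⟨i - 1, by omega⟩
  have hi1 : 1 ≤ i := by omega
  have e1 : 2 ^ (i + 1) = 2 * 2 ^ i := by ring
  have e2 : 2 ^ (i + 1 + 1) = 4 * 2 ^ i := by ring
  have h2 : 2 ≤ 2 ^ i := by
    calc 2 = 2 ^ 1 := rfl
    _ ≤ 2 ^ i := Nat.pow_le_pow_right (by norm_num) hi1
  have key := Choose.choose_modEq_choose_mod_mul_choose_div_nat
    (p := 2) (n := j) (k := 2 ^ (i + 1) - 2)
  unfold Nat.ModEq at key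
  have hk1 : (2 ^ (i + 1) - 2) % 2 = 0 := by omega
  have hk2 : (2 ^ (i + 1) - 2) / 2 = 2 ^ i - 1 := by omega
  rw [hk1, hk2] at key
  have hbound1 : 2 ^ i ≤ j / 2 := by omega
  have hbound2 : j / 2 ≤ 2 ^ (i + 1) - 2 := by omega
  have hd := lemA_aux i hi1 (j / 2) hbound1 hbound2
  simp [Nat.choose] at key
  omega

theorem stmt_12 {F : Type*} [Field F] [Fintype F] [CharP F 2]
    (m : ℕ) (hm : 2 < m) (hcard : Fintype.card F = 2 ^ m)
    (i d : ℕ) (hi : 1 < i) (hde : Even d) (hd1 : 2 ^ i ≤ d) (hd2 : d ≤ 2 ^ (i + 1) - 3)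
    (P : F[X]) (hP : P.natDegree = d) :
    ∃ b : F, (P.comp (X + C b)).coeff (2 ^ i - 1) = 0 ∨
      (P.comp (X + C b)).coeff (2 ^ i - 2) = 0 := by
  have e1 : 2 ^ (i + 1) = 2 * 2 ^ i := by ring
  have h4 : 4 ≤ 2 ^ i := by
    calc 4 = 2 ^ 2 := rfl
    _ ≤ 2 ^ i := Nat.pow_le_pow_right (by norm_num) hi
  set n2 := 2 ^ i - 2 with hn2
  set n1 := 2 ^ i - 1 with hn1
  by_cases h1 : P.coeff n1 = 0
  · exact ⟨0, Or.inl (by simpa using h1)⟩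
  · refine ⟨P.coeff n2 / P.coeff n1, Or.inr ?_⟩
    have hQ : P.hasseDeriv n2 = C (P.coeff n2) + C (P.coeff n1) * X := by
      ext k
      rw [Polynomial.hasseDeriv_coeff]
      match k with
      | 0 => simp
      | 1 =>
        have hch : (1 + n2).choose n2 = n2 + 1 := by
          rw [add_comm]; exact Nat.choose_succ_self_right n2
        have hodd : ∃ q, n2 + 1 = 2 * q + 1 := ⟨2 ^ (i-1) - 1, by
          have : 2 ^ i = 2 * 2 ^ (i - 1) := by
            rw [← pow_succ']
            congr 1
            omega
          omega⟩
        obtain ⟨q, hq⟩ := hodd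
        have hcast : (((1 + n2).choose n2 : ℕ) : F) = 1 := by
          rw [hch, hq]
          push_cast
          rw [CharTwo.two_eq_zero]
          ring
        have h1n2 : 1 + n2 = n1 := by omega
        rw [hcast, h1n2]
        simp
      | (k + 2) =>
        by_cases hbig : d < k + 2 + n2
        · rw [P.coeff_eq_zero_of_natDegree_lt (by omega)]
          simp [coeff_C]
        · push_neg at hbig
          have hdvd : 2 ∣ (k + 2 + n2).choose n2 := by
            have := lemB_aux i (by omega) (k + 2 + n2) (by omega) (by omega)
            simpa [hn2] using this
          have : (((k + 2 + n2).choose n2 : ℕ) : F) = 0 :=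
            (CharP.cast_eq_zero_iff F 2 _).mpr hdvd
          rw [this, zero_mul]
          simp [coeff_C]
    rw [← taylor_apply, taylor_coeff, hQ]
    simp only [eval_add, eval_mul, eval_C, eval_X]
    rw [mul_div_cancel₀ _ h1]
    exact CharTwo.add_self_eq_zero _
end

section
/- For permutations of P¹(F_q) induced by distinct permutation rational functions W = V/U and Y = R/S with deg V, deg R ≤ (d+1)/2 and deg U, deg S ≤ (d+1)/2 for some d < q−1 (and V·S − U·R not constant), the induced permutations are distinct; hence the number of distinct permutations of P¹(F_q) arising from such PRFs equals the number of such PRFs, and this family has pairwise Hamming distance at least q − d − 1 ≥ 1. -/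
open Polynomial

open scoped Classical in
/-- The inversion map `x ↦ x⁻¹` of `P¹(F_q)`, with `0 ↦ ∞` and `∞ ↦ 0`. -/
noncomputable def invP1 {F : Type*} [Field F] : Option F → Option F
  | some a => if a = 0 then none else some a⁻¹
  | none => some 0

theorem stmt_19 {F : Type*} [Field F] [Fintype F]
    (V U R S : F[X]) (d : ℕ)
    (hVU : IsCoprime V U) (hRS : IsCoprime R S)
    (hW : Function.Bijective (prfEval V U))
    (hY : Function.Bijective (prfEval R S))
    (hnc : ∀ c : F, V * S - U * R ≠ C c)
    (hdV : V.natDegree ≤ (d + 1) / 2) (hdR : R.natDegree ≤ (d + 1) / 2)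
    (hdU : U.natDegree ≤ (d + 1) / 2) (hdS : S.natDegree ≤ (d + 1) / 2)
    (hd : d < Fintype.card F - 1) :
    prfEval V U ≠ prfEval R S ∧
    Fintype.card F - d - 1 ≤ Set.ncard {x : Option F | prfEval V U x ≠ prfEval R S x} ∧
    1 ≤ Fintype.card F - d - 1 := by
  classical
  have hq : 0 < Fintype.card F := Fintype.card_pos
  have h3 : 1 ≤ Fintype.card F - d - 1 := by omega
  set P : F[X] := V * S - U * R with hP
  have hP0 : P ≠ 0 := by simpa using hnc 0
  have hdegP : P.natDegree ≤ d + 1 := by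
    refine (natDegree_sub_le _ _).trans (max_le ?_ ?_)
    · exact natDegree_mul_le.trans (by omega)
    · exact natDegree_mul_le.trans (by omega)
  have key : ∀ a : F, prfEval V U (some a) = prfEval R S (some a) → P.eval a = 0 := by
    intro a h
    simp only [prfEval] at h
    by_cases hU : U.eval a = 0 <;> by_cases hS : S.eval a = 0 <;>
      simp only [hU, hS, if_true, if_false, if_pos, if_neg, not_false_iff] at h
    · simp [hP, hU, hS]
    · simp [hU, hS] at h
    · simp [hU, hS] at h
    · simp [hU, hS] at h
      have := (div_eq_div_iff hU hS).mp h
      simp only [hP, eval_sub, eval_mul]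
      linear_combination this
  -- counting
  let B : Finset F := Finset.univ.filter (fun a => P.eval a ≠ 0)
  have hroot : (Finset.univ.filter (fun a => P.eval a = 0)).card ≤ d + 1 := by
    have hsub : Finset.univ.filter (fun a => P.eval a = 0) ⊆ P.roots.toFinset := by
      intro a ha
      simp only [Finset.mem_filter] at ha
      simp [Multiset.mem_toFinset, mem_roots, hP0, IsRoot, ha.2]
    calc (Finset.univ.filter (fun a => P.eval a = 0)).card
        ≤ P.roots.toFinset.card := Finset.card_le_card hsub
      _ ≤ Multiset.card P.roots := P.roots.toFinset_card_le
      _ ≤ P.natDegree := P.card_roots'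
      _ ≤ d + 1 := hdegP
  have hBcard : Fintype.card F - (d + 1) ≤ B.card := by
    have := Finset.card_filter_add_card_filter_not
      (s := (Finset.univ : Finset F)) (p := fun a => P.eval a = 0)
    have hBeq : B.card = (Finset.univ.filter (fun a => ¬ P.eval a = 0)).card := rfl
    simp only [Finset.card_univ] at this
    omega
  have hfin : {x : Option F | prfEval V U x ≠ prfEval R S x}.Finite := Set.toFinite _
  have himg : (B.image some : Finset (Option F)) ⊆ hfin.toFinset := by
    intro x hx
    simp only [Finset.mem_image] at hx
    obtain ⟨a, ha, rfl⟩ := hx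
    simp only [Set.Finite.mem_toFinset, Set.mem_setOf_eq]
    intro hcontra
    exact (Finset.mem_filter.mp ha).2 (key a hcontra)
  have h2 : Fintype.card F - d - 1 ≤
      Set.ncard {x : Option F | prfEval V U x ≠ prfEval R S x} := by
    have hcard : (B.image some).card = B.card :=
      Finset.card_image_of_injective _ (Option.some_injective F)
    have := Finset.card_le_card himg
    rw [hcard] at this
    rw [Set.ncard_eq_toFinset_card _ hfin]
    omega
  refine ⟨?_, h2, h3⟩
  intro heq
  rw [heq] at h2
  simp at h2
  omega
end
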